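/- Let R be a commutative ring, d ≥ 1, and let ℓ = Σ_{i,j} a_{i,j} x_{i,j} be a linear form in R[x_{1,1},…,x_{d,d}] with coefficient matrix A = (a_{i,j}). Applying the differential operator det(∂) = Σ_{σ ∈ S_d} sgn(σ) ∂/∂x_{1,σ(1)} ⋯ ∂/∂x_{d,σ(d)} to ℓ^d yields the constant polynomial d!·det(A). -/

import Mathlib

open MvPolynomial

/-- The generic d×d determinant, a form of degree `d` in the `d²` variables `x_{i,j}`. -/
noncomputable def detd (R : Type*) [CommRing R] (d : ℕ) : MvPolynomial (Fin d × Fin d) R :=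
  Matrix.det (Matrix.of fun i j : Fin d => X (i, j))

/-- The linear form with coefficient matrix `A`, namely `ℓ = Σ_{i,j} A_{i,j} x_{i,j}`. -/
noncomputable def linFormM {R : Type*} [CommRing R] {d : ℕ}
    (A : Matrix (Fin d) (Fin d) R) : MvPolynomial (Fin d × Fin d) R :=
  ∑ ij : Fin d × Fin d, C (A ij.1 ij.2) * X ij

/-- The apolarity action: `diffAction θ F` is the result of applying the
constant-coefficient differential operator obtained from `θ` by substituting
`x_{i,j} ↦ ∂/∂x_{i,j}` to the polynomial `F`.  In particular
`diffAction (detd R d) F = det(∂) F = Σ_σ sgn(σ) ∂/∂x_{1,σ(1)} ⋯ ∂/∂x_{d,σ(d)} F`. -/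
noncomputable def diffAction {R : Type*} [CommSemiring R] {σ : Type*}
    (θ F : MvPolynomial σ R) : MvPolynomial σ R :=
  ∑ a ∈ θ.support, ∑ b ∈ F.support,
    monomial (b - a) (θ.coeff a * F.coeff b * ∏ i ∈ a.support, ((b i).descFactorial (a i) : R))

open Finset

section Aux
variable {R : Type*} [CommRing R] {d : ℕ}

noncomputable def permMon (d : ℕ) (σ : Equiv.Perm (Fin d)) : (Fin d × Fin d) →₀ ℕ :=
  ∑ i, Finsupp.single (σ i, i) 1

lemma permMon_apply (σ : Equiv.Perm (Fin d)) (p : Fin d × Fin d) :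
    permMon d σ p = if p.1 = σ p.2 then 1 else 0 := by
  rw [permMon, Finsupp.finset_sum_apply]
  rcases p with ⟨j, i⟩
  rcases eq_or_ne j (σ i) with h | h
  · subst h
    rw [if_pos rfl, Finset.sum_eq_single i]
    · simp
    · intro k _ hk
      rw [Finsupp.single_apply, if_neg]
      simp only [Prod.mk.injEq, not_and]
      intro _ h2; exact absurd h2.symm hk.symm
    · simp
  · rw [if_neg h, Finset.sum_eq_zero]
    intro k _
    rw [Finsupp.single_apply, if_neg]
    simp only [Prod.mk.injEq, not_and]
    rintro h1 rfl; exact h h1.symm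

lemma permMon_support (σ : Equiv.Perm (Fin d)) :
    (permMon d σ).support = Finset.univ.image (fun i => (σ i, i)) := by
  ext p
  simp only [Finsupp.mem_support_iff, permMon_apply, Finset.mem_image, Finset.mem_univ, true_and]
  rcases p with ⟨j, i⟩
  constructor
  · intro h
    rw [ne_eq, ite_eq_right_iff] at h
    push_neg at h
    exact ⟨i, by rw [← h.1]⟩
  · rintro ⟨k, hk⟩
    obtain ⟨h1, rfl⟩ := Prod.mk.injEq .. ▸ hk
    simp [← h1]

lemma permMon_degree (σ : Equiv.Perm (Fin d)) : (permMon d σ).degree = d := by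
  rw [Finsupp.degree_apply, permMon_support, Finset.sum_image (by intro a _ b _ h; exact congrArg Prod.snd h)]
  simp [permMon_apply]

lemma permMon_injective : Function.Injective (permMon d) := by
  intro σ τ h
  apply Equiv.ext
  intro i
  have := congrArg (fun f => f (σ i, i)) h
  by_contra hne
  simp [permMon_apply, hne] at this

lemma detd_eq (R : Type*) [CommRing R] (d : ℕ) :
    detd R d = ∑ σ : Equiv.Perm (Fin d),
      monomial (permMon d σ) (((Equiv.Perm.sign σ : ℤ) : R)) := by
  rw [detd, Matrix.det_apply]
  refine Finset.sum_congr rfl fun σ _ => ?_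
  have h1 : (∏ i, (Matrix.of fun i j : Fin d => (X (i, j) : MvPolynomial (Fin d × Fin d) R)) (σ i) i)
      = monomial (permMon d σ) 1 := by
    rw [← prod_X_pow_eq_monomial, permMon_support,
      Finset.prod_image (by intro a _ b _ h; exact congrArg Prod.snd h)]
    refine Finset.prod_congr rfl fun i _ => ?_
    rw [permMon_apply, if_pos rfl, pow_one]
    rfl
  rw [h1, Units.smul_def, zsmul_eq_mul, ← map_intCast (C : R →+* MvPolynomial (Fin d × Fin d) R) (Equiv.Perm.sign σ), C_mul_monomial, mul_one]

lemma detd_coeff_permMon (σ : Equiv.Perm (Fin d)) :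
    coeff (permMon d σ) (detd R d) = ((Equiv.Perm.sign σ : ℤ) : R) := by
  rw [detd_eq]
  rw [coeff_sum]
  rw [Finset.sum_eq_single σ]
  · simp [coeff_monomial]
  · intro τ _ hτ
    rw [coeff_monomial, if_neg (fun h => hτ (permMon_injective h))]
  · simp

lemma detd_support_subset :
    (detd R d).support ⊆ Finset.univ.image (permMon d) := by
  rw [detd_eq]
  classical
  refine (MvPolynomial.support_sum).trans ?_
  intro m hm
  rw [Finset.mem_biUnion] at hm
  obtain ⟨σ, -, hσ⟩ := hm
  have := support_monomial_subset hσ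
  rw [Finset.mem_singleton] at this
  subst this
  exact Finset.mem_image_of_mem _ (Finset.mem_univ σ)

lemma linFormM_pow_eq (A : Matrix (Fin d) (Fin d) R) (n : ℕ) :
    linFormM A ^ n = ∑ k ∈ Finset.piAntidiag Finset.univ n,
      monomial (Finsupp.equivFunOnFinite.symm k)
        ((Nat.multinomial Finset.univ k : R) * ∏ ij : Fin d × Fin d, A ij.1 ij.2 ^ k ij) := by
  rw [linFormM, Finset.sum_pow_eq_sum_piAntidiag]
  refine Finset.sum_congr rfl fun k hk => ?_
  have h2 : ∏ ij : Fin d × Fin d, (X ij : MvPolynomial (Fin d × Fin d) R) ^ k ij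
      = monomial (Finsupp.equivFunOnFinite.symm k) 1 := by
    rw [← prod_X_pow_eq_monomial]
    refine (Finset.prod_subset (Finset.subset_univ _) ?_).symm
    intro x _ hx
    have : Finsupp.equivFunOnFinite.symm k x = 0 := Finsupp.notMem_support_iff.mp hx
    change k x = 0 at this
    simp [this]
  simp_rw [mul_pow, Finset.prod_mul_distrib, ← map_pow, ← map_prod]
  rw [h2, ← map_natCast (C : R →+* MvPolynomial (Fin d × Fin d) R), ← mul_assoc,
    ← map_mul, C_mul_monomial, mul_one]

lemma permMon_sum_univ (σ : Equiv.Perm (Fin d)) :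
    ∑ p : Fin d × Fin d, permMon d σ p = d := by
  refine Eq.trans ?_ (permMon_degree σ)
  rw [Finsupp.degree_apply]
  exact (Finset.sum_subset (Finset.subset_univ _)
    (fun x _ hx => Finsupp.notMem_support_iff.mp hx)).symm

lemma permMon_multinomial (σ : Equiv.Perm (Fin d)) :
    Nat.multinomial Finset.univ ⇑(permMon d σ) = d.factorial := by
  have hspec := Nat.multinomial_spec (s := (Finset.univ : Finset (Fin d × Fin d)))
    (f := ⇑(permMon d σ))
  have h1 : ∏ p : Fin d × Fin d, ((permMon d σ) p).factorial = 1 := by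
    refine Finset.prod_eq_one fun p _ => ?_
    rw [permMon_apply]
    split <;> rfl
  rw [h1, one_mul, permMon_sum_univ] at hspec
  exact hspec

lemma permMon_prod_pow (σ : Equiv.Perm (Fin d)) (A : Matrix (Fin d) (Fin d) R) :
    ∏ ij : Fin d × Fin d, A ij.1 ij.2 ^ (permMon d σ) ij = ∏ i, A (σ i) i := by
  rw [← Finset.prod_subset (Finset.subset_univ (permMon d σ).support)
    (fun x _ hx => by rw [Finsupp.notMem_support_iff.mp hx, pow_zero]),
    permMon_support, Finset.prod_image (by intro a _ b _ h; exact congrArg Prod.snd h)]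
  refine Finset.prod_congr rfl fun i _ => ?_
  rw [permMon_apply, if_pos rfl, pow_one]

lemma coeff_linFormM_pow (A : Matrix (Fin d) (Fin d) R) (σ : Equiv.Perm (Fin d)) :
    coeff (permMon d σ) (linFormM A ^ d) = (d.factorial : R) * ∏ i, A (σ i) i := by
  classical
  rw [linFormM_pow_eq, coeff_sum]
  rw [Finset.sum_eq_single (⇑(permMon d σ))]
  · rw [coeff_monomial]
    simp only [Finsupp.equivFunOnFinite_symm_coe, if_true, permMon_multinomial,
      permMon_prod_pow]
  · intro k _ hk
    rw [coeff_monomial, if_neg]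
    intro h
    apply hk
    rw [← h]
    rfl
  · intro hmem
    exfalso
    apply hmem
    rw [Finset.mem_piAntidiag]
    exact ⟨permMon_sum_univ σ, fun i _ => Finset.mem_univ i⟩

lemma linFormM_pow_homog (A : Matrix (Fin d) (Fin d) R) :
    (linFormM A ^ d).IsHomogeneous d := by
  have h1 : (linFormM A).IsHomogeneous 1 := by
    rw [linFormM]
    exact MvPolynomial.IsHomogeneous.sum _ _ _ fun ij _ => MvPolynomial.isHomogeneous_C_mul_X _ _
  simpa using h1.pow d

lemma degree_eq_of_mem_support (A : Matrix (Fin d) (Fin d) R)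
    {b : (Fin d × Fin d) →₀ ℕ} (hb : b ∈ (linFormM A ^ d).support) :
    b.degree = d := by
  by_contra h
  exact (MvPolynomial.mem_support_iff.mp hb) ((linFormM_pow_homog A).coeff_eq_zero h)

lemma eq_of_le_of_degree_eq {s : Type*} {a b : s →₀ ℕ} (hab : a ≤ b)
    (h : a.degree = b.degree) : a = b := by
  have hb : a + (b - a) = b := add_tsub_cancel_of_le hab
  have h2 : a.degree + (b - a).degree = b.degree := by
    rw [Finsupp.degree_eq_weight_one, ← map_add, hb]
  have h3 : (b - a).degree = 0 := by omega
  rw [← hb, (Finsupp.degree_eq_zero_iff _).mp h3, add_zero]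

end Aux

/-- Applying the differential operator `det(∂)` to the `d`-th power of the linear form with
coefficient matrix `A` yields the constant `d! · det(A)`. -/
theorem det_diffop_pow_linear (R : Type*) [CommRing R] (d : ℕ) (hd : 1 ≤ d)
    (A : Matrix (Fin d) (Fin d) R) :
    diffAction (detd R d) (linFormM A ^ d) = C ((d.factorial : R) * A.det) := by
  classical
  rw [diffAction, Finset.sum_subset (detd_support_subset (R := R) (d := d))
    (fun a _ ha => Finset.sum_eq_zero fun b _ => by
      rw [MvPolynomial.notMem_support_iff.mp ha, zero_mul, zero_mul, monomial_zero]),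
    Finset.sum_image (fun σ _ τ _ h => permMon_injective h)]
  have key : ∀ σ : Equiv.Perm (Fin d),
      ∑ b ∈ (linFormM A ^ d).support,
        monomial (b - permMon d σ) ((detd R d).coeff (permMon d σ) * (linFormM A ^ d).coeff b *
          ∏ i ∈ (permMon d σ).support, ((b i).descFactorial ((permMon d σ) i) : R))
      = monomial 0 (((Equiv.Perm.sign σ : ℤ) : R) * ((d.factorial : R) * ∏ i, A (σ i) i)) := by
    intro σ
    rw [Finset.sum_eq_single (permMon d σ)]
    · rw [tsub_self, detd_coeff_permMon, coeff_linFormM_pow]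
      have hp : ∏ x ∈ (permMon d σ).support,
          (((permMon d σ) x).descFactorial ((permMon d σ) x) : R) = 1 := by
        refine Finset.prod_eq_one fun x hx => ?_
        rw [Nat.descFactorial_self]
        have h1 : (permMon d σ) x ≤ 1 := by rw [permMon_apply]; split <;> simp
        rcases Nat.le_one_iff_eq_zero_or_eq_one.mp h1 with h | h <;> simp [h]
      rw [mul_assoc, hp, mul_one]

    · intro b hb hne
      by_cases hz : ∃ x ∈ (permMon d σ).support, b x = 0
      · obtain ⟨x, hx, hbx⟩ := hz
        obtain ⟨k, hk⟩ := Nat.exists_eq_succ_of_ne_zero (Finsupp.mem_support_iff.mp hx)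
        rw [Finset.prod_eq_zero hx (by rw [hbx, hk]; simp), mul_zero, monomial_zero]
      · push_neg at hz
        exfalso
        apply hne
        refine (eq_of_le_of_degree_eq ?_ ?_).symm
        · intro x
          by_cases hx : x ∈ (permMon d σ).support
          · have h1 : (permMon d σ) x ≤ 1 := by rw [permMon_apply]; split <;> simp
            exact h1.trans (Nat.one_le_iff_ne_zero.mpr (hz x hx))
          · rw [Finsupp.notMem_support_iff.mp hx]; exact Nat.zero_le _
        · rw [permMon_degree, degree_eq_of_mem_support A hb]
    · intro hmem
      rw [MvPolynomial.notMem_support_iff.mp hmem, mul_zero, zero_mul, monomial_zero]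
  simp_rw [key, monomial_zero']
  rw [← map_sum, Matrix.det_apply', Finset.mul_sum]
  congr 1
  refine Finset.sum_congr rfl fun σ _ => ?_
  ring
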